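/- Let k ≥ 2 and let N = a₁ + ⋯ + a_k and N = b₁ + ⋯ + b_k be two decompositions of the same positive integer N into k positive integer summands. Then the multinomial coefficients ch(a₁,…,a_k) and ch(b₁,…,b_k) have a common divisor greater than 1. -/

import Mathlib

lemma choose_strict_mono_aux {i j n : ℕ} (hi : 0 < i) (hij : i ≤ j) (hjn : j < n) :
    j.choose i < n.choose i := by
  obtain ⟨m, rfl⟩ : ∃ m, i = m + 1 := ⟨i - 1, by omega⟩
  have h1 : j.choose (m + 1) < (j + 1).choose (m + 1) := by
    rw [Nat.choose_succ_succ]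
    have h0 : 0 < j.choose m := Nat.choose_pos (by omega)
    simp only [Nat.succ_eq_add_one]
    omega
  exact lt_of_lt_of_le h1 (Nat.choose_le_choose _ (by omega))

lemma gcd_choose_gt_one {n i j : ℕ} (hi : 0 < i) (hij : i ≤ j) (hjn : j < n) :
    1 < Nat.gcd (n.choose i) (n.choose j) := by
  by_contra h
  have hpos : 0 < Nat.gcd (n.choose i) (n.choose j) :=
    Nat.gcd_pos_of_pos_left _ (Nat.choose_pos (by omega))
  have hcop : Nat.Coprime (n.choose i) (n.choose j) := by
    unfold Nat.Coprime; omega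
  have key : n.choose j * j.choose i = n.choose i * (n - i).choose (j - i) :=
    Nat.choose_mul hij
  have hdvd : n.choose i ∣ n.choose j * j.choose i := ⟨(n - i).choose (j - i), key⟩
  have : n.choose i ∣ j.choose i := Nat.Coprime.dvd_of_dvd_mul_left hcop hdvd
  have hle : n.choose i ≤ j.choose i := Nat.le_of_dvd (Nat.choose_pos hij) this
  exact absurd hle (not_le.mpr (choose_strict_mono_aux hi hij hjn))

lemma choose_dvd_multinomial {k : ℕ} (hk : 2 ≤ k) {N : ℕ} (a : Fin k → ℕ)
    (hasum : ∑ i, a i = N) :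
    N.choose (a ⟨0, by omega⟩) ∣ Nat.multinomial Finset.univ a := by
  set i0 : Fin k := ⟨0, by omega⟩
  rw [← Finset.insert_erase (Finset.mem_univ i0),
    Nat.multinomial_insert (Finset.notMem_erase _ _)]
  rw [Finset.add_sum_erase _ a (Finset.mem_univ i0), hasum]
  exact Dvd.intro _ rfl

theorem stmt_10 (k : ℕ) (hk : 2 ≤ k) (N : ℕ) (hN : 0 < N) (a b : Fin k → ℕ)
    (hapos : ∀ i, 0 < a i) (hbpos : ∀ i, 0 < b i)
    (hasum : ∑ i, a i = N) (hbsum : ∑ i, b i = N) :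
    1 < Nat.gcd (Nat.multinomial Finset.univ a) (Nat.multinomial Finset.univ b) := by
  set i0 : Fin k := ⟨0, by omega⟩
  set i1 : Fin k := ⟨1, by omega⟩
  have hne : i1 ≠ i0 := by simp [i0, i1, Fin.ext_iff]
  have hlt : ∀ (c : Fin k → ℕ), (∀ i, 0 < c i) → (∑ i, c i = N) → c i0 < N := by
    intro c hcpos hcsum
    have h1 : c i0 + ∑ i ∈ Finset.univ.erase i0, c i = N := by
      rw [Finset.add_sum_erase _ c (Finset.mem_univ i0), hcsum]
    have h2 : c i1 ≤ ∑ i ∈ Finset.univ.erase i0, c i :=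
      Finset.single_le_sum (fun i _ => Nat.zero_le _)
        (Finset.mem_erase.mpr ⟨hne, Finset.mem_univ _⟩)
    have := hcpos i1
    omega
  have haN : a i0 < N := hlt a hapos hasum
  have hbN : b i0 < N := hlt b hbpos hbsum
  have hda : N.choose (a i0) ∣ Nat.multinomial Finset.univ a :=
    choose_dvd_multinomial hk a hasum
  have hdb : N.choose (b i0) ∣ Nat.multinomial Finset.univ b :=
    choose_dvd_multinomial hk b hbsum
  have hg : 1 < Nat.gcd (N.choose (a i0)) (N.choose (b i0)) := by
    rcases le_total (a i0) (b i0) with h | h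
    · exact gcd_choose_gt_one (hapos i0) h hbN
    · rw [Nat.gcd_comm]; exact gcd_choose_gt_one (hbpos i0) h haN
  calc 1 < Nat.gcd (N.choose (a i0)) (N.choose (b i0)) := hg
    _ ≤ Nat.gcd (Nat.multinomial Finset.univ a) (Nat.multinomial Finset.univ b) := by
        apply Nat.le_of_dvd
        · exact Nat.gcd_pos_of_pos_left _ (Nat.multinomial_pos _ _)
        · exact Nat.dvd_gcd ((Nat.gcd_dvd_left _ _).trans hda)
            ((Nat.gcd_dvd_right _ _).trans hdb)
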